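/- Let (λ̂, r̂) ∈ ℝᵐ × (0, ∞) and let (x̂, t̂) ∈ A(λ̂, r̂) be a global minimizer of L̃_{λ̂,r̂}. Then t̂ = ‖h(x̂)‖; in particular, if t̂ = 0 then h(x̂) = 0. -/

import Mathlib

noncomputable section

open Classical in
/-- The extended-real-valued smoothing function `L̃_{λ,r}(x,t)`. -/
def Ltilde {n m : ℕ} (f : EuclideanSpace ℝ (Fin n) → ℝ)
    (h : EuclideanSpace ℝ (Fin n) → EuclideanSpace ℝ (Fin m))
    (lam : EuclideanSpace ℝ (Fin m)) (r : ℝ)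
    (x : EuclideanSpace ℝ (Fin n)) (t : ℝ) : EReal :=
  if 0 < t then
    (((f x + (inner ℝ lam (h x) : ℝ) + r / (2 * t) * ‖h x‖ ^ 2 + r / 2 * t) : ℝ) : EReal)
  else if t = 0 ∧ h x = 0 then ((f x : ℝ) : EReal)
  else ⊤

/-- The augmented dual function `q̃(λ, r) = inf_{(x,t)} L̃_{λ,r}(x,t)`. -/
def qtilde {n m : ℕ} (f : EuclideanSpace ℝ (Fin n) → ℝ)
    (h : EuclideanSpace ℝ (Fin n) → EuclideanSpace ℝ (Fin m))
    (lam : EuclideanSpace ℝ (Fin m)) (r : ℝ) : EReal :=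
  ⨅ p : EuclideanSpace ℝ (Fin n) × ℝ, Ltilde f h lam r p.1 p.2

/-- The set `A(λ, r)` of global minimizers of `L̃_{λ,r}`. -/
def Aset {n m : ℕ} (f : EuclideanSpace ℝ (Fin n) → ℝ)
    (h : EuclideanSpace ℝ (Fin n) → EuclideanSpace ℝ (Fin m))
    (lam : EuclideanSpace ℝ (Fin m)) (r : ℝ) :
    Set (EuclideanSpace ℝ (Fin n) × ℝ) :=
  {p | Ltilde f h lam r p.1 p.2 = qtilde f h lam r}

/-- if `(x̂, t̂)` is a global minimizer of `L̃_{λ̂,r̂}`, then `t̂ = ‖h x̂‖`;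
in particular, if `t̂ = 0` then `h x̂ = 0`. -/
theorem stmt1 {n m : ℕ} (f : EuclideanSpace ℝ (Fin n) → ℝ)
    (h : EuclideanSpace ℝ (Fin n) → EuclideanSpace ℝ (Fin m))
    (hf : ContDiff ℝ 2 f) (hh : ContDiff ℝ 2 h)
    (lamh : EuclideanSpace ℝ (Fin m)) (rh : ℝ) (hrh : 0 < rh)
    (xh : EuclideanSpace ℝ (Fin n)) (th : ℝ)
    (hmem : (xh, th) ∈ Aset f h lamh rh) :
    th = ‖h xh‖ ∧ (th = 0 → h xh = 0) := by

  have hq : ∀ p : EuclideanSpace ℝ (Fin n) × ℝ,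
      qtilde f h lamh rh ≤ Ltilde f h lamh rh p.1 p.2 := fun p => iInf_le _ p
  have heq : Ltilde f h lamh rh xh th = qtilde f h lamh rh := hmem
  have hfin : Ltilde f h lamh rh xh th ≠ ⊤ := by
    rw [heq]
    intro htop
    have h1 := hq (xh, 1)
    rw [htop, top_le_iff] at h1
    simp only [Ltilde, if_pos one_pos] at h1
    exact (EReal.coe_ne_top _) h1
  rcases lt_trichotomy th 0 with hlt | h0 | hpos
  · exact absurd (by simp [Ltilde, not_lt.mpr hlt.le, hlt.ne]) hfin
  · by_cases hx : h xh = 0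
    · subst h0; constructor
      · simp [hx]
      · intro _; exact hx
    · exact absurd (by simp [Ltilde, h0, hx]) hfin
  · by_cases hx : h xh = 0
    · exfalso
      have h1 := hq (xh, 0)
      rw [← heq] at h1
      have LA : Ltilde f h lamh rh xh 0 = ((f xh : ℝ) : EReal) := by
        simp [Ltilde, hx]
      have LB : Ltilde f h lamh rh xh th =
          (((f xh + (inner ℝ lamh (h xh) : ℝ) + rh / (2 * th) * ‖h xh‖ ^ 2
            + rh / 2 * th : ℝ)) : EReal) := by
        simp [Ltilde, hpos]
      rw [LA, LB, EReal.coe_le_coe_iff] at h1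
      rw [hx] at h1
      simp only [inner_zero_right, norm_zero] at h1
      nlinarith
    · have ha : 0 < ‖h xh‖ := norm_pos_iff.mpr hx
      set a := ‖h xh‖ with hadef
      have h1 := hq (xh, a)
      rw [← heq] at h1
      have LA : Ltilde f h lamh rh xh a =
          (((f xh + (inner ℝ lamh (h xh) : ℝ) + rh / (2 * a) * a ^ 2
            + rh / 2 * a : ℝ)) : EReal) := by
        simp [Ltilde, ha, ← hadef]
      have LB : Ltilde f h lamh rh xh th =
          (((f xh + (inner ℝ lamh (h xh) : ℝ) + rh / (2 * th) * a ^ 2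
            + rh / 2 * th : ℝ)) : EReal) := by
        simp [Ltilde, hpos, ← hadef]
      rw [LA, LB, EReal.coe_le_coe_iff] at h1
      have key : rh / (2 * th) * a ^ 2 + rh / 2 * th ≤ rh * a := by
        have hval : rh / (2 * a) * a ^ 2 + rh / 2 * a = rh * a := by
          field_simp; ring
        linarith
      have hid : rh / (2 * th) * a ^ 2 + rh / 2 * th - rh * a
          = rh / (2 * th) * (a - th) ^ 2 := by
        field_simp; ring
      have hcpos : 0 < rh / (2 * th) := by positivity
      have hc : rh / (2 * th) * (a - th) ^ 2 = 0 :=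
        le_antisymm (by linarith) (by positivity)
      have h3 : (a - th) ^ 2 = 0 :=
        (mul_eq_zero.mp hc).resolve_left (ne_of_gt hcpos)
      have h4 : a - th = 0 := by
        exact pow_eq_zero_iff (n := 2) (by norm_num) |>.mp h3
      constructor
      · linarith
      · intro h0; exfalso; linarith
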